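/- Let p > 3 be a prime, n, k integers coprime to p, and ψ a Dirichlet character mod p with ψ non-principal and ψ² non-principal. Then ∑_{m=1}^{p-1} ψ(m)·|∑_{a=1}^{p-1} χ₀(m·a + n·ā)·e(k·a/p)|² = ψ(-n·k²)·τ(ψ̄²)·(2 + ψ(4)), where τ(χ) = ∑_{a=1}^{p} χ(a)·e(a/p) is the Gauss sum. -/

import Mathlib

open Finset Complex

/-- `e p x = e^{2πi x/p}` for `x : ZMod p`. -/
noncomputable def e (p : ℕ) [NeZero p] (x : ZMod p) : ℂ :=
  Complex.exp (2 * Real.pi * Complex.I * x.val / p)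

/-- Gauss sum `τ(f) = ∑_{a mod p} f(a) e^{2πia/p}` associated to `f : ZMod p → ℂ`. -/
noncomputable def gaussSum' (p : ℕ) [NeZero p] (f : ZMod p → ℂ) : ℂ :=
  ∑ a : ZMod p, f a * e p a

/-- The Legendre symbol character mod `p`, with complex values. -/
noncomputable def legChar (p : ℕ) [Fact p.Prime] : DirichletCharacter ℂ p :=
  (quadraticChar (ZMod p)).ringHomComp (Int.castRingHom ℂ)

section AuxLemmas

variable {p : ℕ} [Fact p.Prime]

lemma e_eq (x : ZMod p) : e p x = ZMod.stdAddChar x := by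
  rw [ZMod.stdAddChar_apply, ZMod.toCircle_apply, e]

lemma conj_stdAddChar (x : ZMod p) :
    (starRingEnd ℂ) (ZMod.stdAddChar x) = ZMod.stdAddChar (-x) := by
  rw [AddChar.map_neg_eq_inv, Complex.inv_eq_conj]
  rw [ZMod.stdAddChar_apply]
  exact Circle.norm_coe _

lemma condAux {N a : ZMod p} (ha : a ≠ 0) (m : ZMod p) :
    m * a + N * a⁻¹ = 0 ↔ m = -N * a⁻¹ ^ 2 := by
  have hinv : a * a⁻¹ = 1 := mul_inv_cancel₀ ha
  constructor
  · intro h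
    have h1 : m * a = -(N * a⁻¹) := eq_neg_of_add_eq_zero_left h
    calc m = m * a * a⁻¹ := by rw [mul_assoc, hinv, mul_one]
      _ = -(N * a⁻¹) * a⁻¹ := by rw [h1]
      _ = -N * a⁻¹ ^ 2 := by ring
  · intro h
    subst h
    calc -N * a⁻¹ ^ 2 * a + N * a⁻¹ = -(N * a⁻¹) * (a⁻¹ * a) + N * a⁻¹ := by ring
      _ = 0 := by rw [inv_mul_cancel₀ ha]; ring

lemma lemT (N K : ZMod p) (m : ZMod p) :
    ∑ a ∈ univ.filter (fun a : ZMod p => a ≠ 0),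
        (1 : DirichletCharacter ℂ p) (m * a + N * a⁻¹) * e p (K * a)
      = ∑ a ∈ univ.filter (fun a : ZMod p => a ≠ 0),
        (if m = -N * a⁻¹ ^ 2 then (0:ℂ) else 1) * ZMod.stdAddChar (K * a) := by
  refine Finset.sum_congr rfl (fun a ha => ?_)
  have ha0 : a ≠ 0 := (mem_filter.mp ha).2
  rw [e_eq]
  congr 1
  by_cases h : m = -N * a⁻¹ ^ 2
  · rw [if_pos h, show m * a + N * a⁻¹ = 0 from (condAux ha0 m).mpr h, MulChar.map_zero]
  · rw [if_neg h, MulChar.one_apply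
      (isUnit_iff_ne_zero.mpr (fun h0 => h ((condAux ha0 m).mp h0)))]

lemma lemConj (N K : ZMod p) (m : ZMod p) :
    (starRingEnd ℂ) (∑ a ∈ univ.filter (fun a : ZMod p => a ≠ 0),
        (if m = -N * a⁻¹ ^ 2 then (0:ℂ) else 1) * ZMod.stdAddChar (K * a))
      = ∑ b ∈ univ.filter (fun b : ZMod p => b ≠ 0),
        (if m = -N * b⁻¹ ^ 2 then (0:ℂ) else 1) * ZMod.stdAddChar ((-K) * b) := by
  rw [map_sum]
  refine Finset.sum_congr rfl (fun b hb => ?_)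
  rw [map_mul, conj_stdAddChar, apply_ite (starRingEnd ℂ), map_zero, map_one]
  simp only [neg_mul]

lemma lemD {c : ZMod p} (hc : c ≠ 0) :
    ∑ b ∈ univ.filter (fun b : ZMod p => b ≠ 0), ZMod.stdAddChar (c * b) = (-1 : ℂ) := by
  have hsum : ∑ a : ZMod p, ZMod.stdAddChar (c * a) = 0 := by
    have := AddChar.sum_mulShift (R := ZMod p) (R' := ℂ) c (ZMod.isPrimitive_stdAddChar p)
    simp only [mul_comm] at this ⊢
    rw [this, if_neg hc, Nat.cast_zero]
  rw [Finset.filter_ne', Finset.sum_erase_eq_sub (mem_univ 0), hsum, mul_zero,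
    AddChar.map_zero_eq_one, zero_sub]

lemma lemE {ψ χ : MulChar (ZMod p) ℂ} (hax : ∀ a, χ a = ψ a⁻¹ ^ 2)
    (N : ZMod p) {c : ZMod p} (hc : c ≠ 0) :
    ∑ a ∈ univ.filter (fun a : ZMod p => a ≠ 0),
        ψ (-N * a⁻¹ ^ 2) * ZMod.stdAddChar (c * a)
      = ψ (-N) * (χ c⁻¹ * gaussSum χ ZMod.stdAddChar) := by
  have hpt : ∀ a : ZMod p, ψ (-N * a⁻¹ ^ 2) = ψ (-N) * χ a := by
    intro a
    rw [map_mul, hax a, map_pow]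
  have h0 : ψ (-N * (0:ZMod p)⁻¹ ^ 2) * ZMod.stdAddChar (c * 0) = 0 := by
    rw [hpt 0]
    simp [χ.map_nonunit not_isUnit_zero]
  have htw : ∑ a : ZMod p, χ a * ZMod.stdAddChar (c * a)
      = χ c⁻¹ * gaussSum χ ZMod.stdAddChar := by
    have hu : IsUnit c := isUnit_iff_ne_zero.mpr hc
    have key := gaussSum_mulShift χ ZMod.stdAddChar hu.unit
    have h1 : gaussSum χ (AddChar.mulShift ZMod.stdAddChar hu.unit)
        = ∑ a : ZMod p, χ a * ZMod.stdAddChar (c * a) := by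
      simp [gaussSum, AddChar.mulShift_apply, IsUnit.unit_spec]
    rw [← key, ← h1, ← mul_assoc, ← map_mul, IsUnit.unit_spec,
      inv_mul_cancel₀ hc, MulChar.map_one, one_mul]
  calc ∑ a ∈ univ.filter (fun a : ZMod p => a ≠ 0),
        ψ (-N * a⁻¹ ^ 2) * ZMod.stdAddChar (c * a)
      = ∑ a : ZMod p, ψ (-N * a⁻¹ ^ 2) * ZMod.stdAddChar (c * a) := by
        rw [Finset.filter_ne', Finset.sum_erase_eq_sub (mem_univ 0), h0, sub_zero]
    _ = ∑ a : ZMod p, ψ (-N) * (χ a * ZMod.stdAddChar (c * a)) := by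
        refine Finset.sum_congr rfl (fun a _ => ?_)
        rw [hpt a, mul_assoc]
    _ = ψ (-N) * ∑ a : ZMod p, χ a * ZMod.stdAddChar (c * a) := by rw [← Finset.mul_sum]
    _ = ψ (-N) * (χ c⁻¹ * gaussSum χ ZMod.stdAddChar) := by rw [htw]

lemma lemSum0 {ψ χ : MulChar (ZMod p) ℂ} (hax : ∀ a, χ a = ψ a⁻¹ ^ 2) (hχ : χ ≠ 1)
    (N : ZMod p) :
    ∑ a ∈ univ.filter (fun a : ZMod p => a ≠ 0), ψ (-N * a⁻¹ ^ 2) = 0 := by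
  have h0 : χ 0 = 0 := χ.map_nonunit not_isUnit_zero
  have htot := MulChar.sum_eq_zero_of_ne_one hχ
  have hfil : ∑ a ∈ univ.filter (fun a : ZMod p => a ≠ 0), χ a = 0 := by
    rw [Finset.filter_ne', Finset.sum_erase_eq_sub (mem_univ 0), htot, h0, zero_sub, neg_zero]
  calc ∑ a ∈ univ.filter (fun a : ZMod p => a ≠ 0), ψ (-N * a⁻¹ ^ 2)
      = ∑ a ∈ univ.filter (fun a : ZMod p => a ≠ 0), ψ (-N) * χ a := by
        refine Finset.sum_congr rfl (fun a _ => ?_)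
        rw [map_mul, hax a, map_pow]
    _ = ψ (-N) * ∑ a ∈ univ.filter (fun a : ZMod p => a ≠ 0), χ a := by rw [← Finset.mul_sum]
    _ = 0 := by rw [hfil, mul_zero]


lemma sum_mulchar_zero {χ : MulChar (ZMod p) ℂ} (hχ : χ ≠ 1) :
    ∑ m ∈ univ.filter (fun m : ZMod p => m ≠ 0), χ m = 0 := by
  have h0 : χ 0 = 0 := χ.map_nonunit not_isUnit_zero
  have htot := MulChar.sum_eq_zero_of_ne_one hχ
  rw [Finset.filter_ne', Finset.sum_erase_eq_sub (mem_univ 0), htot, h0, zero_sub, neg_zero]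

lemma innerSumAux {ψ : MulChar (ZMod p) ℂ} (hψ : ψ ≠ 1)
    {α β : ZMod p} (hα : α ≠ 0) (hβ : β ≠ 0) :
    ∑ m ∈ univ.filter (fun m : ZMod p => m ≠ 0),
      ψ m * (if m = α then (0:ℂ) else 1) * (if m = β then (0:ℂ) else 1)
      = -ψ α - ψ β + (if α = β then ψ α else 0) := by
  have key : ∀ (f : ZMod p → ℂ) (γ : ZMod p), γ ≠ 0 →
      (∑ m ∈ univ.filter (fun m : ZMod p => m ≠ 0), if m = γ then f m else 0) = f γ := by
    intro f γ hγ
    rw [Finset.sum_ite_eq' _ γ f, if_pos (by simp [hγ])]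
  have step : ∀ m : ZMod p,
      ψ m * (if m = α then (0:ℂ) else 1) * (if m = β then (0:ℂ) else 1)
      = ψ m - (if m = α then ψ m else 0) - (if m = β then ψ m else 0)
        + (if m = α then (if α = β then ψ α else 0) else 0) := by
    intro m
    by_cases h1 : m = α
    · subst h1
      by_cases h2 : m = β
      · subst h2; simp
      · simp [h2]
    · by_cases h2 : m = β
      · subst h2; simp [h1]
      · simp [h1, h2]
  calc ∑ m ∈ univ.filter (fun m : ZMod p => m ≠ 0),
      ψ m * (if m = α then (0:ℂ) else 1) * (if m = β then (0:ℂ) else 1)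
      = ∑ m ∈ univ.filter (fun m : ZMod p => m ≠ 0),
        (ψ m - (if m = α then ψ m else 0) - (if m = β then ψ m else 0)
          + (if m = α then (if α = β then ψ α else 0) else 0)) :=
      Finset.sum_congr rfl (fun m _ => step m)
    _ = (∑ m ∈ univ.filter (fun m : ZMod p => m ≠ 0), ψ m)
        - (∑ m ∈ univ.filter (fun m : ZMod p => m ≠ 0), if m = α then ψ m else 0)
        - (∑ m ∈ univ.filter (fun m : ZMod p => m ≠ 0), if m = β then ψ m else 0)
        + (∑ m ∈ univ.filter (fun m : ZMod p => m ≠ 0),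
            if m = α then (if α = β then ψ α else 0) else 0) := by
      rw [Finset.sum_add_distrib, Finset.sum_sub_distrib, Finset.sum_sub_distrib]
    _ = 0 - ψ α - ψ β + (if α = β then ψ α else 0) := by
      rw [sum_mulchar_zero hψ, key (fun m => ψ m) α hα, key (fun m => ψ m) β hβ,
        key (fun _ => if α = β then ψ α else 0) α hα]
    _ = -ψ α - ψ β + (if α = β then ψ α else 0) := by ring


end AuxLemmas

theorem stmt_10 (p : ℕ) [Fact p.Prime] (hp : 3 < p) (n k : ℤ)
    (hn : IsCoprime n (p : ℤ)) (hk : IsCoprime k (p : ℤ))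
    (ψ : DirichletCharacter ℂ p) (hψ : ψ ≠ 1) (hψ2 : ψ ^ 2 ≠ 1) :
    ∑ m ∈ univ.filter (fun m : ZMod p => m ≠ 0),
      ψ m * (‖∑ a ∈ univ.filter (fun a : ZMod p => a ≠ 0),
        (1 : DirichletCharacter ℂ p) ((m : ZMod p) * a + (n : ZMod p) * a⁻¹)
          * e p ((k : ZMod p) * a)‖) ^ 2
      = ψ ((-n * k ^ 2 : ℤ) : ZMod p)
          * gaussSum' p (fun a => (starRingEnd ℂ) (ψ a) ^ 2) * (2 + ψ 4) := by
  have hprime : p.Prime := Fact.out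
  have hpint : Prime (p : ℤ) := Nat.prime_iff_prime_int.mp hprime
  have hN : (n : ZMod p) ≠ 0 := by
    rw [Ne, ZMod.intCast_zmod_eq_zero_iff_dvd]
    exact fun h => hpint.not_isUnit (hn.isUnit_of_dvd' h dvd_rfl)
  have hK : (k : ZMod p) ≠ 0 := by
    rw [Ne, ZMod.intCast_zmod_eq_zero_iff_dvd]
    exact fun h => hpint.not_isUnit (hk.isUnit_of_dvd' h dvd_rfl)
  have h2 : (2 : ZMod p) ≠ 0 := by
    intro h
    have h2' : ((2 : ℕ) : ZMod p) = 0 := by exact_mod_cast h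
    have hd := (ZMod.natCast_eq_zero_iff 2 p).mp h2'
    have := Nat.le_of_dvd two_pos hd
    omega
  set N : ZMod p := (n : ZMod p) with hNdef
  set K : ZMod p := (k : ZMod p) with hKdef
  set χ : MulChar (ZMod p) ℂ := star (ψ ^ 2) with hχdef
  set G : ℂ := gaussSum χ ZMod.stdAddChar with hGdef
  have hχ1 : χ ≠ 1 := by
    intro h
    have h2' := congrArg star h
    rw [hχdef, star_star, star_one] at h2'
    exact hψ2 h2'
  have hax : ∀ a : ZMod p, χ a = ψ a⁻¹ ^ 2 := by
    intro a
    rw [hχdef, MulChar.star_apply, MulChar.star_apply', MulChar.inv_apply',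
      MulChar.pow_apply' ψ two_ne_zero]
  have hconj : ∀ a : ZMod p, χ a = (starRingEnd ℂ) (ψ a) ^ 2 := by
    intro a
    rw [hχdef, MulChar.star_apply, MulChar.pow_apply' ψ two_ne_zero, star_pow,
      starRingEnd_apply]
  have habs : ∀ T : ℂ, ((‖T‖ : ℂ)) ^ 2 = T * (starRingEnd ℂ) T := by
    intro T
    rw [Complex.mul_conj, ← Complex.sq_norm, Complex.ofReal_pow]
  have hα : ∀ a : ZMod p, a ≠ 0 → -N * a⁻¹ ^ 2 ≠ 0 := fun a ha =>
    mul_ne_zero (neg_ne_zero.mpr hN) (pow_ne_zero 2 (inv_ne_zero ha))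
  have hKneg : -K ≠ 0 := neg_ne_zero.mpr hK
  have h2K : 2 * K ≠ 0 := mul_ne_zero h2 hK
  have hdiag : ∀ a b : ZMod p, a ≠ 0 → b ≠ 0 →
      ((-N * a⁻¹ ^ 2 = -N * b⁻¹ ^ 2) ↔ (b = a ∨ b = -a)) := by
    intro a b ha hb
    rw [mul_right_inj' (neg_ne_zero.mpr hN), inv_pow, inv_pow, inv_inj, sq, sq,
      mul_self_eq_mul_self_iff]
    constructor
    · rintro (h | h)
      · exact Or.inl h.symm
      · right; rw [h, neg_neg]
    · rintro (h | h)
      · exact Or.inl h.symm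
      · right; rw [h, neg_neg]
  have ha_ne_neg : ∀ a : ZMod p, a ≠ 0 → a ≠ -a := by
    intro a ha h
    apply ha
    have h2a : 2 * a = 0 := by
      rw [two_mul]
      nth_rewrite 2 [h]
      ring
    rcases mul_eq_zero.mp h2a with h' | h'
    · exact absurd h' h2
    · exact h'
  have hG : gaussSum' p (fun a => (starRingEnd ℂ) (ψ a) ^ 2) = G := by
    rw [hGdef]
    refine Finset.sum_congr rfl (fun a _ => ?_)
    rw [e_eq, hconj a]
  have hcast : ((-n * k ^ 2 : ℤ) : ZMod p) = -N * K ^ 2 := by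
    rw [hNdef, hKdef]; push_cast; ring
  have hv1 : χ K⁻¹ = ψ K ^ 2 := by rw [hax, inv_inv]
  have hv2 : χ (-K)⁻¹ = ψ K ^ 2 := by
    rw [hax, inv_inv, show (-K : ZMod p) = -1 * K by ring, map_mul, mul_pow,
      ← map_pow, neg_one_sq, map_one, one_mul]
  have hv3 : χ (2 * K)⁻¹ = ψ 4 * ψ K ^ 2 := by
    rw [hax, inv_inv, map_mul, mul_pow, ← map_pow, show ((2 : ZMod p) ^ 2 = 4) by norm_num]
  have hv4 : ψ (-N * K ^ 2) = ψ (-N) * ψ K ^ 2 := by rw [map_mul, map_pow]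
  calc ∑ m ∈ univ.filter (fun m : ZMod p => m ≠ 0),
      ψ m * (‖∑ a ∈ univ.filter (fun a : ZMod p => a ≠ 0),
        (1 : DirichletCharacter ℂ p) (m * a + N * a⁻¹) * e p (K * a)‖ : ℂ) ^ 2
      = ∑ m ∈ univ.filter (fun m : ZMod p => m ≠ 0), ψ m *
          ((∑ a ∈ univ.filter (fun a : ZMod p => a ≠ 0),
            (if m = -N * a⁻¹ ^ 2 then (0:ℂ) else 1) * ZMod.stdAddChar (K * a)) *
           (∑ b ∈ univ.filter (fun b : ZMod p => b ≠ 0),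
            (if m = -N * b⁻¹ ^ 2 then (0:ℂ) else 1) * ZMod.stdAddChar ((-K) * b))) := by
        refine Finset.sum_congr rfl (fun m _ => ?_)
        rw [lemT N K m, habs, lemConj N K m]
    _ = ∑ m ∈ univ.filter (fun m : ZMod p => m ≠ 0),
        ∑ a ∈ univ.filter (fun a : ZMod p => a ≠ 0),
        ∑ b ∈ univ.filter (fun b : ZMod p => b ≠ 0),
          (ZMod.stdAddChar (K * a) * ZMod.stdAddChar ((-K) * b)) *
            (ψ m * (if m = -N * a⁻¹ ^ 2 then (0:ℂ) else 1) *
              (if m = -N * b⁻¹ ^ 2 then (0:ℂ) else 1)) := by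
      refine Finset.sum_congr rfl (fun m _ => ?_)
      rw [Finset.sum_mul_sum, Finset.mul_sum]
      refine Finset.sum_congr rfl (fun a _ => ?_)
      rw [Finset.mul_sum]
      refine Finset.sum_congr rfl (fun b _ => ?_)
      ring
    _ = ∑ a ∈ univ.filter (fun a : ZMod p => a ≠ 0),
        ∑ b ∈ univ.filter (fun b : ZMod p => b ≠ 0),
          (ZMod.stdAddChar (K * a) * ZMod.stdAddChar ((-K) * b)) *
            ∑ m ∈ univ.filter (fun m : ZMod p => m ≠ 0),
              ψ m * (if m = -N * a⁻¹ ^ 2 then (0:ℂ) else 1) *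
                (if m = -N * b⁻¹ ^ 2 then (0:ℂ) else 1) := by
      rw [Finset.sum_comm]
      refine Finset.sum_congr rfl (fun a _ => ?_)
      rw [Finset.sum_comm]
      refine Finset.sum_congr rfl (fun b _ => ?_)
      rw [Finset.mul_sum]
    _ = ∑ a ∈ univ.filter (fun a : ZMod p => a ≠ 0),
        ∑ b ∈ univ.filter (fun b : ZMod p => b ≠ 0),
          ((-(ψ (-N * a⁻¹ ^ 2) * ZMod.stdAddChar (K * a))) * ZMod.stdAddChar ((-K) * b)
            + ZMod.stdAddChar (K * a) * (-(ψ (-N * b⁻¹ ^ 2) * ZMod.stdAddChar ((-K) * b)))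
            + (ZMod.stdAddChar (K * a) * ZMod.stdAddChar ((-K) * b)) *
              (if -N * a⁻¹ ^ 2 = -N * b⁻¹ ^ 2 then ψ (-N * a⁻¹ ^ 2) else 0)) := by
      refine Finset.sum_congr rfl (fun a ha => ?_)
      refine Finset.sum_congr rfl (fun b hb => ?_)
      rw [innerSumAux hψ (hα a (mem_filter.mp ha).2) (hα b (mem_filter.mp hb).2)]
      ring
    _ = (∑ a ∈ univ.filter (fun a : ZMod p => a ≠ 0),
          -(ψ (-N * a⁻¹ ^ 2) * ZMod.stdAddChar (K * a))) *
        (∑ b ∈ univ.filter (fun b : ZMod p => b ≠ 0), ZMod.stdAddChar ((-K) * b))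
        + (∑ a ∈ univ.filter (fun a : ZMod p => a ≠ 0), ZMod.stdAddChar (K * a)) *
          (∑ b ∈ univ.filter (fun b : ZMod p => b ≠ 0),
            -(ψ (-N * b⁻¹ ^ 2) * ZMod.stdAddChar ((-K) * b)))
        + ∑ a ∈ univ.filter (fun a : ZMod p => a ≠ 0),
          ∑ b ∈ univ.filter (fun b : ZMod p => b ≠ 0),
            (ZMod.stdAddChar (K * a) * ZMod.stdAddChar ((-K) * b)) *
              (if -N * a⁻¹ ^ 2 = -N * b⁻¹ ^ 2 then ψ (-N * a⁻¹ ^ 2) else 0) := by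
      simp only [Finset.sum_add_distrib]
      rw [Finset.sum_mul_sum, Finset.sum_mul_sum]
    _ = (-(ψ (-N) * (χ K⁻¹ * G))) * (-1) + (-1) * (-(ψ (-N) * (χ (-K)⁻¹ * G)))
        + (0 + ψ (-N) * (χ (2 * K)⁻¹ * G)) := by
      have e1 : ∑ a ∈ univ.filter (fun a : ZMod p => a ≠ 0),
          -(ψ (-N * a⁻¹ ^ 2) * ZMod.stdAddChar (K * a)) = -(ψ (-N) * (χ K⁻¹ * G)) := by
        rw [Finset.sum_neg_distrib, lemE hax N hK, ← hGdef]
      have e2 : ∑ b ∈ univ.filter (fun b : ZMod p => b ≠ 0),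
          ZMod.stdAddChar ((-K) * b) = (-1 : ℂ) := lemD hKneg
      have e3 : ∑ a ∈ univ.filter (fun a : ZMod p => a ≠ 0),
          ZMod.stdAddChar (K * a) = (-1 : ℂ) := lemD hK
      have e4 : ∑ b ∈ univ.filter (fun b : ZMod p => b ≠ 0),
          -(ψ (-N * b⁻¹ ^ 2) * ZMod.stdAddChar ((-K) * b)) = -(ψ (-N) * (χ (-K)⁻¹ * G)) := by
        rw [Finset.sum_neg_distrib, lemE hax N hKneg, ← hGdef]
      have hGfin : ∀ a ∈ univ.filter (fun a : ZMod p => a ≠ 0),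
          ∑ b ∈ univ.filter (fun b : ZMod p => b ≠ 0),
            (ZMod.stdAddChar (K * a) * ZMod.stdAddChar ((-K) * b)) *
              (if -N * a⁻¹ ^ 2 = -N * b⁻¹ ^ 2 then ψ (-N * a⁻¹ ^ 2) else 0)
          = ψ (-N * a⁻¹ ^ 2) + ψ (-N * a⁻¹ ^ 2) * ZMod.stdAddChar ((2 * K) * a) := by
        intro a ha
        have ha0 : a ≠ 0 := (mem_filter.mp ha).2
        have hsub : ({a, -a} : Finset (ZMod p)) ⊆ univ.filter (fun b : ZMod p => b ≠ 0) := by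
          intro x hx
          rcases Finset.mem_insert.mp hx with rfl | hx
          · exact mem_filter.mpr ⟨mem_univ _, ha0⟩
          · rw [Finset.mem_singleton] at hx
            subst hx
            exact mem_filter.mpr ⟨mem_univ _, neg_ne_zero.mpr ha0⟩
        calc ∑ b ∈ univ.filter (fun b : ZMod p => b ≠ 0),
            (ZMod.stdAddChar (K * a) * ZMod.stdAddChar ((-K) * b)) *
              (if -N * a⁻¹ ^ 2 = -N * b⁻¹ ^ 2 then ψ (-N * a⁻¹ ^ 2) else 0)
            = ∑ b ∈ univ.filter (fun b : ZMod p => b ≠ 0),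
              (if b ∈ ({a, -a} : Finset (ZMod p)) then
                (ZMod.stdAddChar (K * a) * ZMod.stdAddChar ((-K) * b)) * ψ (-N * a⁻¹ ^ 2)
               else 0) := by
              refine Finset.sum_congr rfl (fun b hb => ?_)
              have hb0 : b ≠ 0 := (mem_filter.mp hb).2
              rw [mul_ite, mul_zero]
              refine if_congr ?_ rfl rfl
              rw [hdiag a b ha0 hb0]
              simp
          _ = ∑ b ∈ (univ.filter (fun b : ZMod p => b ≠ 0)) ∩ ({a, -a} : Finset (ZMod p)),
              (ZMod.stdAddChar (K * a) * ZMod.stdAddChar ((-K) * b)) * ψ (-N * a⁻¹ ^ 2) :=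
              Finset.sum_ite_mem _ _ _
          _ = ∑ b ∈ ({a, -a} : Finset (ZMod p)),
              (ZMod.stdAddChar (K * a) * ZMod.stdAddChar ((-K) * b)) * ψ (-N * a⁻¹ ^ 2) := by
              rw [Finset.inter_eq_right.mpr hsub]
          _ = (ZMod.stdAddChar (K * a) * ZMod.stdAddChar ((-K) * a)) * ψ (-N * a⁻¹ ^ 2)
              + (ZMod.stdAddChar (K * a) * ZMod.stdAddChar ((-K) * (-a))) * ψ (-N * a⁻¹ ^ 2) :=
              Finset.sum_pair (ha_ne_neg a ha0)
          _ = ψ (-N * a⁻¹ ^ 2) + ψ (-N * a⁻¹ ^ 2) * ZMod.stdAddChar ((2 * K) * a) := by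
              rw [← AddChar.map_add_eq_mul, ← AddChar.map_add_eq_mul,
                show K * a + (-K) * a = 0 by ring,
                show K * a + (-K) * (-a) = (2 * K) * a by ring,
                AddChar.map_zero_eq_one]
              ring
      have e5 : ∑ a ∈ univ.filter (fun a : ZMod p => a ≠ 0),
          ∑ b ∈ univ.filter (fun b : ZMod p => b ≠ 0),
            (ZMod.stdAddChar (K * a) * ZMod.stdAddChar ((-K) * b)) *
              (if -N * a⁻¹ ^ 2 = -N * b⁻¹ ^ 2 then ψ (-N * a⁻¹ ^ 2) else 0)
          = 0 + ψ (-N) * (χ (2 * K)⁻¹ * G) := by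
        rw [Finset.sum_congr rfl hGfin, Finset.sum_add_distrib, lemSum0 hax hχ1 N,
          lemE hax N h2K, ← hGdef]
      rw [e1, e2, e3, e4, e5]
    _ = ψ ((-n * k ^ 2 : ℤ) : ZMod p)
        * gaussSum' p (fun a => (starRingEnd ℂ) (ψ a) ^ 2) * (2 + ψ 4) := by
      rw [hcast, hG, hv1, hv2, hv3, hv4]
      ring
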